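/- Let A and B be rings, M an (A,B)-bimodule that is finitely generated projective as a right B-module, N a (B,A)-bimodule that is finitely generated projective as a left B-module, and η : M ⊗_B N → A an injective (A,A)-bimodule homomorphism. Assume: (i) if b ∈ B satisfies η(mb ⊗ n) = 0 for all m ∈ M and n ∈ N, then b = 0; (ii) if m ∈ M satisfies η(m ⊗ n) = 0 for all n ∈ N, then m = 0; (iii) if n ∈ N satisfies η(m ⊗ n) = 0 for all m ∈ M, then n = 0. Let Tr_{B^op}(M) ⊆ B be the two-sided ideal generated by the images g(M) over all right B-linear maps g : M → B, and Tr_B(N) ⊆ B the two-sided ideal generated by the images f(N) over all left B-linear maps f : N → B, and assume M·Tr_B(N) = M and Tr_{B^op}(M)·N = N. Then there exists a unique (B,B)-bimodule homomorphism ρ : N ⊗_A M → B such that (M, N, η, ρ) is a Morita context between A and B. -/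

import Mathlib

open MulOpposite
open scoped TensorProduct

universe u

section EtaSetup

variable (A B M N : Type u) [Ring A] [Ring B]
  [AddCommGroup M] [AddCommGroup N]
  [Module A M] [Module Bᵐᵒᵖ M] [SMulCommClass A Bᵐᵒᵖ M]
  [Module B N] [Module Aᵐᵒᵖ N] [SMulCommClass B Aᵐᵒᵖ N]

/-- An `(A,A)`-bimodule homomorphism `η : M ⊗[B] N → A`, presented via the corresponding
`B`-balanced biadditive `A`-bilinear pairing `eta : M → N → A`. -/
structure EtaPairing where
  eta : M → N → A
  eta_add_left : ∀ m m' n, eta (m + m') n = eta m n + eta m' n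
  eta_add_right : ∀ m n n', eta m (n + n') = eta m n + eta m n'
  eta_smul_left : ∀ (a : A) m n, eta (a • m) n = a * eta m n
  eta_smul_right : ∀ (a : A) m n, eta m (op a • n) = eta m n * a
  eta_balanced : ∀ (b : B) m n, eta (op b • m) n = eta m (b • n)

variable {A B M N}
variable (P : EtaPairing A B M N)

/-- The pairing `η` as a biadditive map. -/
def etaAddHom : M →+ N →+ A :=
  AddMonoidHom.mk'
    (fun m => AddMonoidHom.mk' (fun n => P.eta m n) (fun n n' => P.eta_add_right m n n'))
    (fun m m' => by ext n; simp [P.eta_add_left])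

/-- The map induced by `η` on the `ℤ`-tensor product `M ⊗[ℤ] N`. -/
noncomputable def etaLift : M ⊗[ℤ] N →+ A :=
  TensorProduct.liftAddHom (etaAddHom P) (fun z m n => by simp [map_zsmul])

/-- The subgroup of balancing relations defining `M ⊗[B] N` as a quotient of
`M ⊗[ℤ] N`; the map `η : M ⊗[B] N → A` is injective iff the kernel of `etaLift` is
contained in this subgroup. -/
noncomputable def balancedRel : AddSubgroup (M ⊗[ℤ] N) :=
  AddSubgroup.closure {x : M ⊗[ℤ] N |
    ∃ (b : B) (m : M) (n : N), x = (op b • m) ⊗ₜ[ℤ] n - m ⊗ₜ[ℤ] (b • n)}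

lemma eta_zero_left (n : N) : P.eta 0 n = 0 := by
  have := (etaAddHom P).map_zero
  calc P.eta 0 n = etaAddHom P 0 n := rfl
    _ = 0 := by rw [this]; rfl

lemma eta_zero_right (m : M) : P.eta m 0 = 0 := (etaAddHom P m).map_zero

lemma eta_sub_right (m : M) (n n' : N) : P.eta m (n - n') = P.eta m n - P.eta m n' :=
  (etaAddHom P m).map_sub n n'

lemma etaLift_tmul (m : M) (n : N) : etaLift P (m ⊗ₜ[ℤ] n) = P.eta m n := by
  simp [etaLift, TensorProduct.liftAddHom_tmul]; rfl

/-- The biadditive map `(x, y) ↦ x · f(y)` on `M × N`, as a map on `M ⊗[ℤ] N`. -/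
noncomputable def phiLift (f : N →ₗ[B] B) : M ⊗[ℤ] N →+ M :=
  TensorProduct.liftAddHom
    (AddMonoidHom.mk'
      (fun x => AddMonoidHom.mk' (fun y => op (f y) • x)
        (fun y y' => by simp only [map_add, op_add, add_smul]))
      (fun x x' => by ext y; simp only [AddMonoidHom.mk'_apply, AddMonoidHom.add_apply, smul_add]))
    (fun z x y => by
      show op (f y) • (z • x) = op (f (z • y)) • x
      rw [map_zsmul, op_smul, smul_assoc]
      exact smul_comm _ _ _)

lemma phiLift_tmul (f : N →ₗ[B] B) (x : M) (y : N) :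
    phiLift (M := M) f (x ⊗ₜ[ℤ] y) = op (f y) • x := by
  simp [phiLift, TensorProduct.liftAddHom_tmul]

lemma phiLift_balanced (f : N →ₗ[B] B) (x : M ⊗[ℤ] N)
    (hx : x ∈ balancedRel (B := B) (M := M) (N := N)) :
    phiLift (M := M) f x = 0 := by
  induction hx using AddSubgroup.closure_induction with
  | mem z hz =>
    obtain ⟨b, m, n, rfl⟩ := hz
    rw [map_sub, phiLift_tmul, phiLift_tmul, map_smul, sub_eq_zero]
    rw [smul_smul]
    rfl
  | zero => exact map_zero _
  | add x y _ _ hx hy => rw [map_add, hx, hy, add_zero]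
  | neg x _ hx => rw [map_neg, hx, neg_zero]

/-- Key identity: `m'' · f(n · η(m0, n0)) = (η(m'', n) • m0) · f(n0)`. -/
lemma key_identity (heta_inj : ∀ x : M ⊗[ℤ] N, etaLift P x = 0 →
      x ∈ balancedRel (B := B) (M := M) (N := N))
    (f : N →ₗ[B] B) (m'' m0 : M) (n n0 : N) :
    op (f (op (P.eta m0 n0) • n)) • m'' = op (f n0) • (P.eta m'' n • m0) := by
  set z : M ⊗[ℤ] N := m'' ⊗ₜ[ℤ] (op (P.eta m0 n0) • n) - (P.eta m'' n • m0) ⊗ₜ[ℤ] n0 with hz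
  have h0 : etaLift P z = 0 := by
    rw [hz, map_sub, etaLift_tmul, etaLift_tmul, P.eta_smul_right, P.eta_smul_left, sub_self]
  have := phiLift_balanced f z (heta_inj z h0)
  rw [hz, map_sub, phiLift_tmul, phiLift_tmul, sub_eq_zero] at this
  exact this

/-- Let `M` be an `(A,B)`-bimodule, finitely generated projective as a
right `B`-module, `N` a `(B,A)`-bimodule, finitely generated projective as a left
`B`-module, and `η : M ⊗[B] N → A` an injective `(A,A)`-bimodule homomorphism satisfying
the nondegeneracy conditions (i)–(iii).  If `M` is `Tr_B(N)`-accessible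
(`M · Tr_B(N) = M`) and `N` is `Tr_{Bᵒᵖ}(M)`-accessible (`Tr_{Bᵒᵖ}(M) · N = N`), then
there is a unique `(B,B)`-bimodule homomorphism `ρ : N ⊗[A] M → B` making `(M, N, η, ρ)`
a Morita context between `A` and `B`. -/
theorem exists_unique_rho_completing_morita_context
    [Module.Finite Bᵐᵒᵖ M] [Module.Projective Bᵐᵒᵖ M]
    [Module.Finite B N] [Module.Projective B N]
    (heta_inj : ∀ x : M ⊗[ℤ] N, etaLift P x = 0 →
      x ∈ balancedRel (B := B) (M := M) (N := N))
    (hB' : ∀ b : B, (∀ (m : M) (n : N), P.eta (op b • m) n = 0) → b = 0)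
    (hM' : ∀ m : M, (∀ n : N, P.eta m n = 0) → m = 0)
    (hN' : ∀ n : N, (∀ m : M, P.eta m n = 0) → n = 0)
    (hMacc : AddSubgroup.closure
      {x : M | ∃ (f : N →ₗ[B] B) (n : N) (m : M), x = op (f n) • m} = ⊤)
    (hNacc : AddSubgroup.closure
      {y : N | ∃ (g : M →ₗ[Bᵐᵒᵖ] B) (m : M) (n : N), y = g m • n} = ⊤) :
    ∃! rho : N → M → B,
      (∀ n n' m, rho (n + n') m = rho n m + rho n' m) ∧
      (∀ n m m', rho n (m + m') = rho n m + rho n m') ∧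
      (∀ (b : B) n m, rho (b • n) m = b * rho n m) ∧
      (∀ (b : B) n m, rho n (op b • m) = rho n m * b) ∧
      (∀ (a : A) n m, rho (op a • n) m = rho n (a • m)) ∧
      (∀ m n m', P.eta m n • m' = op (rho n m') • m) ∧
      (∀ n m n', rho n m • n' = op (P.eta m n') • n) := by
  -- `Good n m b` means `b` is the value of `ρ(n ⊗ m)`.
  classical
  let Good : N → M → B → Prop := fun n m b => ∀ m'' : M, op b • m'' = P.eta m'' n • m
  -- uniqueness of such a `b`
  have hGuniq : ∀ (n : N) (m : M) (b b' : B), Good n m b → Good n m b' → b = b' := by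
    intro n m b b' h h'
    have hzero : ∀ (m'' : M) (n'' : N), P.eta (op (b - b') • m'') n'' = 0 := by
      intro m'' n''
      have : op (b - b') • m'' = (0 : M) := by
        rw [op_sub, sub_smul, h m'', h' m'', sub_self]
      rw [this, eta_zero_left]
    have := hB' (b - b') hzero
    exact sub_eq_zero.mp this
  -- existence of such a `b`, using accessibility of `M` and the key identity
  have hex : ∀ (n : N) (m : M), ∃ b : B, Good n m b := by
    intro n m
    have hm : m ∈ AddSubgroup.closure
        {x : M | ∃ (f : N →ₗ[B] B) (n : N) (m : M), x = op (f n) • m} := by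
      rw [hMacc]; trivial
    induction hm using AddSubgroup.closure_induction with
    | mem x hx =>
      obtain ⟨f, n0, m0, rfl⟩ := hx
      refine ⟨f (op (P.eta m0 n0) • n), fun m'' => ?_⟩
      rw [key_identity P heta_inj f m'' m0 n n0]
      exact (smul_comm (P.eta m'' n) (op (f n0)) m0).symm
    | zero =>
      refine ⟨0, fun m'' => ?_⟩
      show op (0 : B) • m'' = P.eta m'' n • (0 : M)
      rw [op_zero, zero_smul, smul_zero]
    | add x y _ _ hx hy =>
      obtain ⟨b, hb⟩ := hx
      obtain ⟨b', hb'⟩ := hy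
      refine ⟨b + b', fun m'' => ?_⟩
      show op (b + b') • m'' = P.eta m'' n • (x + y)
      rw [op_add, add_smul, hb m'', hb' m'', smul_add]
    | neg x _ hx =>
      obtain ⟨b, hb⟩ := hx
      refine ⟨-b, fun m'' => ?_⟩
      show op (-b) • m'' = P.eta m'' n • (-x)
      rw [op_neg, neg_smul, hb m'', smul_neg]
  -- define ρ
  let rho : N → M → B := fun n m => (hex n m).choose
  have hrho : ∀ n m, Good n m (rho n m) := fun n m => (hex n m).choose_spec
  refine ⟨rho, ⟨?_, ?_, ?_, ?_, ?_, ?_, ?_⟩, ?_⟩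
  · -- additive in n
    intro n n' m
    refine hGuniq (n + n') m _ _ (hrho _ _) (fun m'' => ?_)
    rw [op_add, add_smul, hrho n m m'', hrho n' m m'', ← add_smul, ← P.eta_add_right]
  · -- additive in m
    intro n m m'
    refine hGuniq n (m + m') _ _ (hrho _ _) (fun m'' => ?_)
    rw [op_add, add_smul, hrho n m m'', hrho n m' m'', ← smul_add]
  · -- left B-linear in n
    intro b0 n m
    refine hGuniq (b0 • n) m _ _ (hrho _ _) (fun m'' => ?_)
    have : op (b0 * rho n m) • m'' = op (rho n m) • (op b0 • m'') := by
      rw [smul_smul]; rfl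
    rw [this, hrho n m (op b0 • m''), P.eta_balanced]
  · -- right B-linear in m
    intro b0 n m
    refine hGuniq n (op b0 • m) _ _ (hrho _ _) (fun m'' => ?_)
    have : op (rho n m * b0) • m'' = op b0 • (op (rho n m) • m'') := by
      rw [smul_smul]; rfl
    rw [this, hrho n m m'']
    exact (smul_comm (P.eta m'' n) (op b0) m).symm
  · -- A-balanced
    intro a n m
    refine hGuniq n (a • m) _ _ (fun m'' => ?_) (hrho _ _)
    rw [hrho (op a • n) m m'', P.eta_smul_right, mul_smul]
  · -- first Morita associativity
    intro m n m'
    exact (hrho n m' m).symm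
  · -- second Morita associativity
    intro n m n'
    have key : ∀ m'' : M, P.eta m'' (rho n m • n' - op (P.eta m n') • n) = 0 := by
      intro m''
      rw [eta_sub_right, ← P.eta_balanced, hrho n m m'', P.eta_smul_left,
        P.eta_smul_right, sub_self]
    exact sub_eq_zero.mp (hN' _ key)
  · -- uniqueness of ρ
    rintro rho' ⟨_, _, _, _, _, h6, _⟩
    funext n m
    exact hGuniq n m _ _ (fun m'' => (h6 m'' n m).symm) (hrho n m)

end EtaSetup
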